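/- The function f is non-increasing on [0,∞): for all 0 ≤ β₁ ≤ β₂ one has f(β₂) ≤ f(β₁). Moreover, if X is not ℙ-almost surely equal to a constant, then f is strictly decreasing on (0,∞). -/

import Mathlib

open MeasureTheory Real

/-- The Laplace transform `λ_β = 𝔼[e^{-βX}]` of the conductance law. -/
noncomputable def lam {Ω : Type*} [MeasurableSpace Ω] (P : Measure Ω) (X : Ω → ℝ) (β : ℝ) : ℝ :=
  ∫ ω, Real.exp (-β * X ω) ∂P

/-- The annealed critical point `h_a(β) = log(ℓ-1) + log λ_β`. -/
noncomputable def annealedCP {Ω : Type*} [MeasurableSpace Ω] (P : Measure Ω) (X : Ω → ℝ)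
    (ℓ : ℕ) (β : ℝ) : ℝ :=
  Real.log ((ℓ : ℝ) - 1) + Real.log (lam P X β)

/-- The function `f(β) = h_a(β) + β·𝔼[X e^{-βX}]/λ_β  (= h_a(β) - β h_a'(β))`. -/
noncomputable def fDS {Ω : Type*} [MeasurableSpace Ω] (P : Measure Ω) (X : Ω → ℝ)
    (ℓ : ℕ) (β : ℝ) : ℝ :=
  annealedCP P X ℓ β + β * (∫ ω, X ω * Real.exp (-β * X ω) ∂P) / lam P X β

section aux
set_option linter.unusedSectionVars false
variable {Ω : Type*} [MeasurableSpace Ω] {P : Measure Ω} [IsProbabilityMeasure P]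
  {X : Ω → ℝ} (hX : Measurable X)
  (hInt : ∀ s : ℝ, Integrable (fun ω => Real.exp (-s * X ω)) P)

include hInt

lemma lam_pos (β : ℝ) : 0 < lam P X β :=
  integral_exp_pos (hInt β)

include hX in
lemma intX (β : ℝ) : Integrable (fun ω => X ω * Real.exp (-β * X ω)) P := by
  refine ((hInt (β - 1)).add (hInt (β + 1))).mono' ?_ ?_
  · exact (hX.mul ((hX.const_mul (-β)).exp)).aestronglyMeasurable
  · filter_upwards with ω
    rw [Real.norm_eq_abs, abs_mul, abs_exp]
    have h1 : |X ω| ≤ Real.exp (X ω) + Real.exp (-X ω) := by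
      rcases abs_cases (X ω) with ⟨h1, h2⟩ | ⟨h1, h2⟩ <;>
        nlinarith [Real.add_one_le_exp (X ω), Real.add_one_le_exp (-X ω),
          Real.exp_pos (X ω), Real.exp_pos (-X ω)]
    calc |X ω| * Real.exp (-β * X ω)
        ≤ (Real.exp (X ω) + Real.exp (-X ω)) * Real.exp (-β * X ω) :=
          mul_le_mul_of_nonneg_right h1 (Real.exp_pos _).le
      _ = Real.exp (-(β - 1) * X ω) + Real.exp (-(β + 1) * X ω) := by
          rw [add_mul, ← Real.exp_add, ← Real.exp_add]; ring_nf

include hX in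
/-- The pointwise tangent-line integral identity: the integral of the tangent minorant
equals `e^m · λ_β`, where `m = (β-β')·G(β)/λ(β)`. -/
lemma tangent_integral (β β' m : ℝ)
    (hm : m = (β - β') * (∫ ω, X ω * Real.exp (-β * X ω) ∂P) / lam P X β) :
    ∫ ω, Real.exp m * ((1 + ((β - β') * X ω - m)) * Real.exp (-β * X ω)) ∂P
      = Real.exp m * lam P X β := by
  rw [integral_const_mul]
  congr 1
  have hfun : (fun ω => (1 + ((β - β') * X ω - m)) * Real.exp (-β * X ω))
      = fun ω => (1 - m) * Real.exp (-β * X ω) + (β - β') * (X ω * Real.exp (-β * X ω)) := by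
    funext ω; ring
  rw [hfun, integral_add (((hInt β).const_mul _)) ((intX hX hInt β).const_mul _),
    integral_const_mul, integral_const_mul]
  have hΛ : lam P X β ≠ 0 := (lam_pos hInt β).ne'
  show (1 - m) * lam P X β + (β - β') * (∫ ω, X ω * Real.exp (-β * X ω) ∂P) = lam P X β
  have : m * lam P X β = (β - β') * (∫ ω, X ω * Real.exp (-β * X ω) ∂P) := by
    rw [hm]; field_simp
  linarith [this]

include hX in
/-- Tangent inequality for the log-Laplace transform. -/
lemma key_le (β β' : ℝ) :
    (β - β') * (∫ ω, X ω * Real.exp (-β * X ω) ∂P) / lam P X β + Real.log (lam P X β)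
      ≤ Real.log (lam P X β') := by
  set m := (β - β') * (∫ ω, X ω * Real.exp (-β * X ω) ∂P) / lam P X β with hm
  have hpt : ∀ ω, Real.exp m * ((1 + ((β - β') * X ω - m)) * Real.exp (-β * X ω))
      ≤ Real.exp (-β' * X ω) := by
    intro ω
    have h := Real.add_one_le_exp ((β - β') * X ω - m)
    have h2 : Real.exp ((β - β') * X ω - m) * (Real.exp m * Real.exp (-β * X ω))
        = Real.exp (-β' * X ω) := by
      rw [← Real.exp_add, ← Real.exp_add]; congr 1; ring
    calc Real.exp m * ((1 + ((β - β') * X ω - m)) * Real.exp (-β * X ω))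
        = (((β - β') * X ω - m) + 1) * (Real.exp m * Real.exp (-β * X ω)) := by ring
      _ ≤ Real.exp ((β - β') * X ω - m) * (Real.exp m * Real.exp (-β * X ω)) :=
          mul_le_mul_of_nonneg_right h (mul_pos (Real.exp_pos _) (Real.exp_pos _)).le
      _ = Real.exp (-β' * X ω) := h2
  have hintL : Integrable
      (fun ω => Real.exp m * ((1 + ((β - β') * X ω - m)) * Real.exp (-β * X ω))) P := by
    have hfun : (fun ω => Real.exp m * ((1 + ((β - β') * X ω - m)) * Real.exp (-β * X ω)))
        = fun ω => (Real.exp m * (1 - m)) * Real.exp (-β * X ω)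
            + (Real.exp m * (β - β')) * (X ω * Real.exp (-β * X ω)) := by
      funext ω; ring
    rw [hfun]
    exact ((hInt β).const_mul _).add ((intX hX hInt β).const_mul _)
  have hI : Real.exp m * lam P X β ≤ lam P X β' := by
    rw [← tangent_integral hX hInt β β' m hm]
    exact integral_mono hintL (hInt β') hpt
  have := Real.log_le_log (mul_pos (Real.exp_pos m) (lam_pos hInt β)) hI
  rwa [Real.log_mul (Real.exp_pos m).ne' (lam_pos hInt β).ne', Real.log_exp] at this

end aux

section aux2
set_option linter.unusedSectionVars false
variable {Ω : Type*} [MeasurableSpace Ω] {P : Measure Ω} [IsProbabilityMeasure P]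
  {X : Ω → ℝ} (hX : Measurable X)
  (hInt : ∀ s : ℝ, Integrable (fun ω => Real.exp (-s * X ω)) P)

include hX hInt

lemma key_lt (hne : ¬ ∃ c : ℝ, ∀ᵐ ω ∂P, X ω = c) {β β' : ℝ} (hββ' : β ≠ β') :
    (β - β') * (∫ ω, X ω * Real.exp (-β * X ω) ∂P) / lam P X β + Real.log (lam P X β)
      < Real.log (lam P X β') := by
  set m := (β - β') * (∫ ω, X ω * Real.exp (-β * X ω) ∂P) / lam P X β with hm
  set T : Ω → ℝ := fun ω => Real.exp m * ((1 + ((β - β') * X ω - m)) * Real.exp (-β * X ω))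
    with hT
  have hexp : ∀ ω, Real.exp ((β - β') * X ω - m) * (Real.exp m * Real.exp (-β * X ω))
      = Real.exp (-β' * X ω) := by
    intro ω; rw [← Real.exp_add, ← Real.exp_add]; congr 1; ring
  have hpt : ∀ ω, T ω ≤ Real.exp (-β' * X ω) := by
    intro ω
    have h := Real.add_one_le_exp ((β - β') * X ω - m)
    calc T ω = (((β - β') * X ω - m) + 1) * (Real.exp m * Real.exp (-β * X ω)) := by
          rw [hT]; ring
      _ ≤ Real.exp ((β - β') * X ω - m) * (Real.exp m * Real.exp (-β * X ω)) :=
          mul_le_mul_of_nonneg_right h (mul_pos (Real.exp_pos _) (Real.exp_pos _)).le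
      _ = Real.exp (-β' * X ω) := hexp ω
  have hintT : Integrable T P := by
    have hfun : T = fun ω => (Real.exp m * (1 - m)) * Real.exp (-β * X ω)
            + (Real.exp m * (β - β')) * (X ω * Real.exp (-β * X ω)) := by
      funext ω; rw [hT]; ring
    rw [hfun]
    exact ((hInt β).const_mul _).add ((intX hX hInt β).const_mul _)
  set g : Ω → ℝ := fun ω => Real.exp (-β' * X ω) - T ω with hg
  have hgint : Integrable g P := (hInt β').sub hintT
  have hgnn : 0 ≤ g := fun ω => sub_nonneg.mpr (hpt ω)
  set c : ℝ := m / (β - β') with hc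
  have hSsub : {ω | X ω ≠ c} ⊆ Function.support g := by
    intro ω hω
    have ht : (β - β') * X ω - m ≠ 0 := by
      intro h0
      apply hω
      rw [hc]
      field_simp [sub_ne_zero.mpr hββ'] at h0 ⊢
      linarith [h0]
    have h := Real.add_one_lt_exp ht
    have : T ω < Real.exp (-β' * X ω) := by
      calc T ω = (((β - β') * X ω - m) + 1) * (Real.exp m * Real.exp (-β * X ω)) := by
            rw [hT]; ring
        _ < Real.exp ((β - β') * X ω - m) * (Real.exp m * Real.exp (-β * X ω)) :=
            mul_lt_mul_of_pos_right h (mul_pos (Real.exp_pos _) (Real.exp_pos _))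
        _ = Real.exp (-β' * X ω) := hexp ω
    simp only [Function.mem_support, hg]
    exact sub_ne_zero.mpr (ne_of_gt this)
  have hSpos : 0 < P {ω | X ω ≠ c} := by
    rcases (zero_le : 0 ≤ P {ω | X ω ≠ c}).lt_or_eq with h | h
    · exact h
    · exfalso
      apply hne
      refine ⟨c, ?_⟩
      rw [MeasureTheory.ae_iff]
      exact h.symm
  have hIg : 0 < ∫ ω, g ω ∂P := by
    rw [integral_pos_iff_support_of_nonneg hgnn hgint]
    exact lt_of_lt_of_le hSpos (measure_mono hSsub)
  have hsub : ∫ ω, g ω ∂P = lam P X β' - Real.exp m * lam P X β := by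
    rw [hg]
    rw [integral_sub (hInt β') hintT]
    rw [tangent_integral hX hInt β β' m hm]
    rfl
  have hI : Real.exp m * lam P X β < lam P X β' := by linarith [hIg, hsub.symm ▸ hIg]
  have := Real.log_lt_log (mul_pos (Real.exp_pos m) (lam_pos hInt β)) hI
  rwa [Real.log_mul (Real.exp_pos m).ne' (lam_pos hInt β).ne', Real.log_exp] at this

end aux2

/-- `f` is non-increasing on `[0,∞)`, and strictly decreasing on `(0,∞)` if `X` is not
a.s. constant. -/
theorem fDS_antitone {Ω : Type*} [MeasurableSpace Ω] (P : Measure Ω) [IsProbabilityMeasure P]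
    (X : Ω → ℝ) (hX : Measurable X)
    (hInt : ∀ s : ℝ, Integrable (fun ω => Real.exp (-s * X ω)) P)
    (ℓ : ℕ) (hℓ : 3 ≤ ℓ) :
    (∀ β₁ β₂ : ℝ, 0 ≤ β₁ → β₁ ≤ β₂ → fDS P X ℓ β₂ ≤ fDS P X ℓ β₁) ∧
    ((¬ ∃ c : ℝ, ∀ᵐ ω ∂P, X ω = c) →
      ∀ β₁ β₂ : ℝ, 0 < β₁ → β₁ < β₂ → fDS P X ℓ β₂ < fDS P X ℓ β₁) := by

  constructor
  · intro β₁ β₂ hβ₁ hle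
    rcases eq_or_lt_of_le hle with rfl | hlt
    · exact le_refl _
    simp only [fDS, annealedCP, mul_div_assoc]
    set L₁ := Real.log (lam P X β₁)
    set L₂ := Real.log (lam P X β₂)
    set a := (∫ ω, X ω * Real.exp (-β₁ * X ω) ∂P) / lam P X β₁ with ha
    set b := (∫ ω, X ω * Real.exp (-β₂ * X ω) ∂P) / lam P X β₂ with hb
    have A : (β₂ - β₁) * b + L₂ ≤ L₁ := by
      have := key_le hX hInt β₂ β₁
      rw [mul_div_assoc] at this
      exact this
    have B : (β₁ - β₂) * a + L₁ ≤ L₂ := by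
      have := key_le hX hInt β₁ β₂
      rw [mul_div_assoc] at this
      exact this
    have hM : b ≤ a := by
      have h3 : (β₂ - β₁) * (b - a) ≤ 0 := by nlinarith [A, B]
      rcases mul_nonpos_iff.mp h3 with ⟨h4, _⟩ | ⟨_, h5⟩
      · linarith
      · linarith
    nlinarith [A, mul_nonneg hβ₁ (sub_nonneg.mpr hM)]
  · intro hne β₁ β₂ hβ₁ hlt
    simp only [fDS, annealedCP, mul_div_assoc]
    set L₁ := Real.log (lam P X β₁)
    set L₂ := Real.log (lam P X β₂)
    set a := (∫ ω, X ω * Real.exp (-β₁ * X ω) ∂P) / lam P X β₁ with ha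
    set b := (∫ ω, X ω * Real.exp (-β₂ * X ω) ∂P) / lam P X β₂ with hb
    have A : (β₂ - β₁) * b + L₂ < L₁ := by
      have := key_lt hX hInt hne (ne_of_gt hlt)
      rw [mul_div_assoc] at this
      exact this
    have B : (β₁ - β₂) * a + L₁ ≤ L₂ := by
      have := key_le hX hInt β₁ β₂
      rw [mul_div_assoc] at this
      exact this
    have hM : b ≤ a := by
      have h3 : (β₂ - β₁) * (b - a) ≤ 0 := by nlinarith [A, B]
      rcases mul_nonpos_iff.mp h3 with ⟨h4, _⟩ | ⟨_, h5⟩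
      · linarith
      · linarith
    nlinarith [A, mul_nonneg hβ₁.le (sub_nonneg.mpr hM)]
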